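/- Assume IP is ergodic, shift-invariant, weakly elliptic, and P_0(lim X_n·ℓ = ∞) = 1. Then the set S = {ω : for all y ∈ Z^d, P_y^ω(inf_{m≥0} X_m·ℓ < 0) = 1} has IP(S) = 0, and moreover P_0^ω(inf_{m≥0} X_m·ℓ ≥ 0) > 0 for IP-a.e. ω. -/

import Mathlib

open MeasureTheory Filter Set
open scoped ENNReal

noncomputable section

abbrev Zd (d : ℕ) := Fin d → ℤ
abbrev Env (d : ℕ) := Zd d → Zd d → ℝ
abbrev Traj (d : ℕ) := ℕ → Zd d

/-- shift of the environment by `k`: `(T^k ω) x e = ω (k+x) e`. -/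
def shiftE {d : ℕ} (k : Zd d) (ω : Env d) : Env d := fun x e => ω (k + x) e

/-- the sup-norm ball of radius `M` in `ℤ^d`, the set of admissible jumps. -/
def box (d M : ℕ) : Finset (Zd d) := Finset.Icc (fun _ => -(M : ℤ)) (fun _ => (M : ℤ))

/-- scalar product `x · ℓ`. -/
def dotl {d : ℕ} (x : Zd d) (ℓ : Fin d → ℝ) : ℝ := ∑ i, (x i : ℝ) * ℓ i

/-- the local drift in direction `ℓ`: `D(ω)·ℓ`. -/
def driftl {d : ℕ} (M : ℕ) (ℓ : Fin d → ℝ) (ω : Env d) : ℝ :=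
  ∑ e ∈ box d M, dotl e ℓ * ω 0 e

/-- `μ` is the law of the quenched walk in environment `ω` started at `x0`:
a probability measure with `X_0 = x0` a.s., and the Markov property with
transition probabilities `ω i (j - i)` from `i` to `j`. -/
def IsWalk {d : ℕ} (μ : Measure (Traj d)) (ω : Env d) (x0 : Zd d) : Prop :=
  IsProbabilityMeasure μ ∧ μ {w | w 0 = x0} = 1 ∧
  ∀ (n : ℕ) (A : Set (Traj d)), MeasurableSet A →
    (∀ w w' : Traj d, (∀ m ≤ n, w m = w' m) → (w ∈ A ↔ w' ∈ A)) →
    ∀ i j : Zd d,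
      μ (A ∩ {w | w n = i ∧ w (n + 1) = j}) =
        ENNReal.ofReal (ω i (j - i)) * μ (A ∩ {w | w n = i})

/-- a nice environment of range `M`: nonnegative transition probabilities of
total mass one, supported on jumps of sup-norm at most `M`. -/
def GoodEnv {d : ℕ} (M : ℕ) (ω : Env d) : Prop :=
  (∀ x e, 0 ≤ ω x e) ∧ (∀ x, ∑ e ∈ box d M, ω x e = 1) ∧
  (∀ x e, e ∉ box d M → ω x e = 0)

/-- `U` is `M`-connected: there is a path of range `M` through all its points. -/
def MConn {d : ℕ} (M : ℕ) (U : Finset (Zd d)) : Prop :=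
  ∃ (n : ℕ) (p : ℕ → Zd d), (∀ i ≤ n, p i ∈ U) ∧
    (∀ i < n, p (i + 1) - p i ∈ box d M) ∧ (∀ x ∈ U, ∃ i ≤ n, p i = x)

/-- `E^ω_{x0}[Σ_{j=0}^{T_U} 1(X_j = x)]`, the expected number of visits to `x`
before exiting `U`. -/
def exitGreen {d : ℕ} (μ : Measure (Traj d)) (U : Set (Zd d)) (x : Zd d) : ℝ≥0∞ :=
  ∑' j : ℕ, μ {w | w j = x ∧ ∀ m < j, w m ∈ U}

/-- Kalikow's condition in direction `ℓ` with constant `ε`, for the annealed walk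
with environment distribution `IP` and quenched laws `P ω` (started at `0`). -/
def KalikowCond {d : ℕ} (IP : Measure (Env d)) (P : Env d → Measure (Traj d))
    (M : ℕ) (ℓ : Fin d → ℝ) (ε : ℝ) : Prop :=
  0 < ε ∧ ∀ U : Finset (Zd d), (0 : Zd d) ∈ U → MConn M U → ∀ x ∈ U,
    ε * ∫ ω, (exitGreen (P ω) (↑U) x).toReal ∂IP ≤
      ∫ ω, driftl M ℓ (shiftE x ω) * (exitGreen (P ω) (↑U) x).toReal ∂IP

/-- shift invariance of the environment measure. -/
def ShiftInv {d : ℕ} (IP : Measure (Env d)) : Prop :=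
  ∀ k : Zd d, Measure.map (shiftE k) IP = IP

/-- ergodicity of the environment measure under the shifts. -/
def ErgEnv {d : ℕ} (IP : Measure (Env d)) : Prop :=
  ShiftInv IP ∧ ∀ S : Set (Env d), MeasurableSet S →
    (∀ k : Zd d, shiftE k ⁻¹' S = S) → IP S = 0 ∨ IP S = 1

/-- invariance of a measure for the environment process viewed from the particle,
whose kernel is `π(ω, A) = Σ_{|e| ≤ M} π_{0e}(ω) 1_A(T^e ω)`. -/
def EnvInvariant {d : ℕ} (M : ℕ) (IPinf : Measure (Env d)) : Prop :=
  ∀ A : Set (Env d), MeasurableSet A →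
    ∫⁻ ω, ∑ e ∈ box d M, ENNReal.ofReal (ω 0 e) * A.indicator 1 (shiftE e ω) ∂IPinf
      = IPinf A

/-- weak ellipticity in direction `ℓ`: a.s. `π_{0j} > 0` for all unit vectors `j`
with `j·ℓ ≥ 0`. -/
def WeakElliptic {d : ℕ} (IP : Measure (Env d)) (ℓ : Fin d → ℝ) : Prop :=
  ∀ᵐ ω ∂IP, ∀ e : Zd d, (∑ i, (e i) * (e i)) = 1 → 0 ≤ dotl e ℓ → 0 < ω 0 e

/-- the half-space σ-field `S_k = σ(ω_x : x·ℓ ≥ k)`. -/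
def Sfield {d : ℕ} (ℓ : Fin d → ℝ) (k : ℝ) : MeasurableSpace (Env d) :=
  ⨆ x ∈ {x : Zd d | k ≤ dotl x ℓ}, MeasurableSpace.comap (fun ω : Env d => ω x) inferInstance

section Aux
variable {d : ℕ}

example : Countable (Zd d) := inferInstance
example : MeasurableSingletonClass (Zd d) := inferInstance
example (n : ℕ) : MeasurableSingletonClass (Fin n → Zd d) := inferInstance

lemma measurableSet_Zd (s : Set (Zd d)) : MeasurableSet s := s.to_countable.measurableSet

lemma measurableSet_det {n : ℕ} {A : Set (Traj d)}
    (h : ∀ w w' : Traj d, (∀ m ≤ n, w m = w' m) → (w ∈ A ↔ w' ∈ A)) :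
    MeasurableSet A := by
  classical
  set F : Traj d → (Fin (n+1) → Zd d) := fun w i => w i with hF
  have hFm : Measurable F := measurable_pi_lambda _ fun i => measurable_pi_apply _
  have hA : A = F ⁻¹' (F '' A) := by
    ext w
    constructor
    · exact fun hw => ⟨w, hw, rfl⟩
    · rintro ⟨w', hw', hww⟩
      refine (h w' w (fun m hm => ?_)).1 hw'
      have := congrFun hww ⟨m, Nat.lt_succ_of_le hm⟩
      simpa [hF] using this
  rw [hA]
  exact hFm ((F '' A).to_countable.measurableSet)

lemma dotl_add (x y : Zd d) (ℓ : Fin d → ℝ) : dotl (x + y) ℓ = dotl x ℓ + dotl y ℓ := by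
  simp [dotl, add_mul, Finset.sum_add_distrib]

lemma dotl_zero (ℓ : Fin d → ℝ) : dotl (0 : Zd d) ℓ = 0 := by simp [dotl]

lemma dotl_neg (x : Zd d) (ℓ : Fin d → ℝ) : dotl (-x) ℓ = - dotl x ℓ := by
  simp [dotl, Finset.sum_neg_distrib]

lemma dotl_single (i : Fin d) (ℓ : Fin d → ℝ) : dotl (Pi.single i 1) ℓ = ℓ i := by
  simp [dotl, Pi.single_apply]

end Aux
open scoped Classical in
/-- `phi ω ℓ x0 c n j` : probability that the walk started at `x0` stays at level `≥ c`
through time `n` and sits at `j` at time `n`. -/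
def phi {d : ℕ} (ω : Env d) (ℓ : Fin d → ℝ) (x0 : Zd d) (c : ℝ) : ℕ → Zd d → ℝ≥0∞
  | 0 => fun j => if j = x0 ∧ c ≤ dotl j ℓ then 1 else 0
  | n+1 => fun j => if c ≤ dotl j ℓ then
      ∑' i : Zd d, phi ω ℓ x0 c n i * ENNReal.ofReal (ω i (j - i)) else 0

def survA {d : ℕ} (ω : Env d) (ℓ : Fin d → ℝ) (x0 : Zd d) (c : ℝ) : ℝ≥0∞ :=
  ⨅ n : ℕ, ∑' j : Zd d, phi ω ℓ x0 c n j

section PhiLemmas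
variable {d : ℕ} (ℓ : Fin d → ℝ)

lemma measurable_phi (x0 : Zd d) (c : ℝ) (n : ℕ) (j : Zd d) :
    Measurable fun ω : Env d => phi ω ℓ x0 c n j := by
  induction n generalizing j with
  | zero => simp only [phi]; exact measurable_const
  | succ n ih =>
    simp only [phi]
    split_ifs with h
    · exact Measurable.ennreal_tsum fun i =>
        ((ih i).mul (ENNReal.measurable_ofReal.comp
          ((measurable_pi_apply (j - i)).comp (measurable_pi_apply i))))
    · exact measurable_const

lemma measurable_survA (x0 : Zd d) (c : ℝ) :
    Measurable fun ω : Env d => survA ω ℓ x0 c := by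
  exact Measurable.iInf fun n => Measurable.ennreal_tsum fun j => measurable_phi ℓ x0 c n j

lemma phi_shift (y : Zd d) (ω : Env d) (x0 : Zd d) (c : ℝ) (n : ℕ) (j : Zd d) :
    phi (shiftE y ω) ℓ x0 c n j = phi ω ℓ (y + x0) (c + dotl y ℓ) n (y + j) := by
  induction n generalizing j with
  | zero =>
    simp only [phi]
    congr 1
    rw [eq_iff_iff]
    constructor
    · rintro ⟨h1, h2⟩
      exact ⟨by rw [h1], by rw [dotl_add]; linarith⟩
    · rintro ⟨h1, h2⟩
      refine ⟨add_left_cancel h1, ?_⟩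
      rw [dotl_add] at h2; linarith
  | succ n ih =>
    simp only [phi]
    have hc : (c ≤ dotl j ℓ) ↔ (c + dotl y ℓ ≤ dotl (y + j) ℓ) := by
      rw [dotl_add]; constructor <;> intro <;> linarith
    by_cases h : c ≤ dotl j ℓ
    · rw [if_pos h, if_pos (hc.1 h)]
      rw [← (Equiv.addLeft y).tsum_eq (fun i => phi ω ℓ (y + x0) (c + dotl y ℓ) n i *
        ENNReal.ofReal (ω i (y + j - i)))]
      apply tsum_congr
      intro i
      rw [ih]
      simp only [Equiv.coe_addLeft, shiftE]
      congr 2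
      abel
    · rw [if_neg h, if_neg (fun hh => h (hc.2 hh))]

lemma survA_shift (y : Zd d) (ω : Env d) (x0 : Zd d) (c : ℝ) :
    survA (shiftE y ω) ℓ x0 c = survA ω ℓ (y + x0) (c + dotl y ℓ) := by
  unfold survA
  refine iInf_congr fun n => ?_
  rw [← (Equiv.addLeft y).tsum_eq (fun j => phi ω ℓ (y + x0) (c + dotl y ℓ) n j)]
  exact tsum_congr fun j => phi_shift ℓ y ω x0 c n j

lemma phi_anti_c {c c' : ℝ} (hcc : c ≤ c') (ω : Env d) (x0 : Zd d) (n : ℕ) (j : Zd d) :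
    phi ω ℓ x0 c' n j ≤ phi ω ℓ x0 c n j := by
  induction n generalizing j with
  | zero =>
    simp only [phi]
    split_ifs with h1 h2
    · rfl
    · exact absurd ⟨h1.1, le_trans hcc h1.2⟩ h2
    all_goals exact zero_le
  | succ n ih =>
    simp only [phi]
    split_ifs with h1 h2
    · exact Summable.tsum_le_tsum (fun i => mul_le_mul_left (ih i) _) ENNReal.summable ENNReal.summable
    · exact absurd (le_trans hcc h1) h2
    all_goals exact zero_le

lemma env_le_one {M : ℕ} {ω : Env d} (hg : GoodEnv M ω) (x e : Zd d) : ω x e ≤ 1 := by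
  by_cases he : e ∈ box d M
  · calc ω x e ≤ ∑ e' ∈ box d M, ω x e' :=
        Finset.single_le_sum (fun e' _ => hg.1 x e') he
    _ = 1 := hg.2.1 x
  · rw [hg.2.2 x e he]; exact zero_le_one

lemma row_sum {M : ℕ} {ω : Env d} (hg : GoodEnv M ω) (i : Zd d) :
    ∑' j : Zd d, ENNReal.ofReal (ω i (j - i)) = 1 := by
  rw [← (Equiv.subRight i).symm.tsum_eq (fun j => ENNReal.ofReal (ω i (j - i)))]
  simp only [Equiv.subRight_symm_apply]
  have h0 : ∀ e ∉ box d M, ENNReal.ofReal (ω i (e + i - i)) = 0 := by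
    intro e he
    simp only [add_sub_cancel_right]
    rw [hg.2.2 i e he, ENNReal.ofReal_zero]
  rw [tsum_eq_sum h0]
  have : ∀ e ∈ box d M, ENNReal.ofReal (ω i (e + i - i)) = ENNReal.ofReal (ω i e) := by
    intro e _; simp
  rw [Finset.sum_congr rfl this, ← ENNReal.ofReal_sum_of_nonneg]
  · rw [hg.2.1 i, ENNReal.ofReal_one]
  · intro e _; exact hg.1 i e

lemma phi_mass {M : ℕ} {ω : Env d} (hg : GoodEnv M ω) (x0 : Zd d) (c : ℝ) (n : ℕ) :
    ∑' j : Zd d, phi ω ℓ x0 c n j ≤ 1 := by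
  induction n with
  | zero =>
    simp only [phi]
    calc (∑' j : Zd d, if j = x0 ∧ c ≤ dotl j ℓ then (1:ℝ≥0∞) else 0)
        ≤ ∑' j : Zd d, if j = x0 then (1:ℝ≥0∞) else 0 := by
          refine Summable.tsum_le_tsum (fun j => ?_) ENNReal.summable ENNReal.summable
          split_ifs with h1 h2 <;> first | rfl | exact zero_le | exact absurd h1.1 h2
    _ = 1 := by rw [tsum_eq_single x0 (by intro b hb; rw [if_neg hb])]; rw [if_pos rfl]
  | succ n ih =>
    simp only [phi]
    calc (∑' j : Zd d, if c ≤ dotl j ℓ then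
            ∑' i : Zd d, phi ω ℓ x0 c n i * ENNReal.ofReal (ω i (j - i)) else 0)
        ≤ ∑' j : Zd d, ∑' i : Zd d, phi ω ℓ x0 c n i * ENNReal.ofReal (ω i (j - i)) := by
          refine Summable.tsum_le_tsum (fun j => ?_) ENNReal.summable ENNReal.summable
          split_ifs <;> first | rfl | exact zero_le
    _ = ∑' i : Zd d, ∑' j : Zd d, phi ω ℓ x0 c n i * ENNReal.ofReal (ω i (j - i)) :=
          ENNReal.tsum_comm
    _ = ∑' i : Zd d, phi ω ℓ x0 c n i * ∑' j : Zd d, ENNReal.ofReal (ω i (j - i)) := by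
          exact tsum_congr fun i => ENNReal.tsum_mul_left
    _ = ∑' i : Zd d, phi ω ℓ x0 c n i := by
          refine tsum_congr fun i => ?_
          rw [row_sum hg i, mul_one]
    _ ≤ 1 := ih

lemma survA_anti_c {c c' : ℝ} (hcc : c ≤ c') (ω : Env d) (x0 : Zd d) :
    survA ω ℓ x0 c' ≤ survA ω ℓ x0 c :=
  iInf_mono fun n => Summable.tsum_le_tsum (fun j => phi_anti_c ℓ hcc ω x0 n j)
    ENNReal.summable ENNReal.summable

lemma phi_step_lower {M : ℕ} {ω : Env d} (hg : GoodEnv M ω) {x0 : Zd d} {c : ℝ}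
    (hc : c ≤ dotl x0 ℓ) (e : Zd d) (n : ℕ) (j : Zd d) :
    ENNReal.ofReal (ω x0 e) * phi ω ℓ (x0 + e) c n j ≤ phi ω ℓ x0 c (n + 1) j := by
  induction n generalizing j with
  | zero =>
    simp only [phi]
    by_cases hj : c ≤ dotl j ℓ
    · rw [if_pos hj]
      by_cases hje : j = x0 + e
      · rw [if_pos ⟨hje, hj⟩, mul_one]
        rw [tsum_eq_single x0 (by
          intro b hb
          rw [if_neg (fun hh => hb hh.1), zero_mul])]
        rw [if_pos ⟨rfl, hc⟩, one_mul, hje]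
        simp
      · rw [if_neg (fun hh => hje hh.1), mul_zero]
        exact zero_le
    · rw [if_neg hj, if_neg (fun hh => hj hh.2), mul_zero]
  | succ n ih =>
    simp only [phi]
    by_cases hj : c ≤ dotl j ℓ
    · rw [if_pos hj, if_pos hj, ← ENNReal.tsum_mul_left]
      refine Summable.tsum_le_tsum (fun i => ?_) ENNReal.summable ENNReal.summable
      rw [← mul_assoc]
      exact mul_le_mul_left (ih i) _
    · rw [if_neg hj, if_neg hj, mul_zero]

lemma survA_step {M : ℕ} {ω : Env d} (hg : GoodEnv M ω) {x0 : Zd d} {c : ℝ}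
    (hc : c ≤ dotl x0 ℓ) (e : Zd d) :
    ENNReal.ofReal (ω x0 e) * survA ω ℓ (x0 + e) c ≤ survA ω ℓ x0 c := by
  refine le_iInf fun n => ?_
  have ha1 : ENNReal.ofReal (ω x0 e) ≤ 1 := by
    rw [← ENNReal.ofReal_one]
    exact ENNReal.ofReal_le_ofReal (env_le_one hg x0 e)
  have hs1 : survA ω ℓ (x0 + e) c ≤ 1 :=
    le_trans (iInf_le _ 0) (phi_mass ℓ hg (x0 + e) c 0)
  match n with
  | 0 =>
    calc ENNReal.ofReal (ω x0 e) * survA ω ℓ (x0 + e) c ≤ 1 * 1 := mul_le_mul' ha1 hs1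
    _ = 1 := by rw [mul_one]
    _ = ∑' j : Zd d, phi ω ℓ x0 c 0 j := by
        simp only [phi]
        rw [tsum_eq_single x0 (by intro b hb; rw [if_neg (fun hh => hb hh.1)])]
        rw [if_pos ⟨rfl, hc⟩]
  | (n+1) =>
    calc ENNReal.ofReal (ω x0 e) * survA ω ℓ (x0 + e) c
        ≤ ENNReal.ofReal (ω x0 e) * ∑' j : Zd d, phi ω ℓ (x0 + e) c n j :=
          mul_le_mul_right (iInf_le _ n) _
    _ = ∑' j : Zd d, ENNReal.ofReal (ω x0 e) * phi ω ℓ (x0 + e) c n j :=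
          ENNReal.tsum_mul_left.symm
    _ ≤ ∑' j : Zd d, phi ω ℓ x0 c (n + 1) j :=
          Summable.tsum_le_tsum (fun j => phi_step_lower ℓ hg hc e n j)
            ENNReal.summable ENNReal.summable

end PhiLemmas
section WalkLemmas
variable {d : ℕ}

lemma measurableSet_coord (n : ℕ) (s : Set (Zd d)) : MeasurableSet {w : Traj d | w n ∈ s} :=
  measurable_pi_apply n (measurableSet_Zd s)

lemma measure_partition (μ : Measure (Traj d)) {E : Set (Traj d)} (hE : MeasurableSet E)
    (n : ℕ) : μ E = ∑' i : Zd d, μ (E ∩ {w | w n = i}) := by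
  have hU : E = ⋃ i : Zd d, E ∩ {w | w n = i} := by
    ext w
    simp only [Set.mem_iUnion, Set.mem_inter_iff, Set.mem_setOf_eq]
    exact ⟨fun hw => ⟨w n, hw, rfl⟩, fun ⟨i, hw, _⟩ => hw⟩
  conv_lhs => rw [hU]
  refine measure_iUnion (fun i i' hii => ?_) (fun i => hE.inter (measurableSet_coord n {i}))
  simp only [Function.onFun, Set.disjoint_left]
  rintro w ⟨-, hw⟩ ⟨-, hw'⟩
  exact hii (hw ▸ hw')

variable (ℓ : Fin d → ℝ)

lemma walk_phi {μ : Measure (Traj d)} {ω : Env d} {x0 : Zd d} (hw : IsWalk μ ω x0)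
    (t : ℕ) (x : Zd d) (c : ℝ) {A : Set (Traj d)}
    (hAdet : ∀ w w' : Traj d, (∀ m ≤ t, w m = w' m) → (w ∈ A ↔ w' ∈ A)) (n : ℕ) (j : Zd d) :
    μ (A ∩ {w | w t = x} ∩ {w | ∀ m, t ≤ m → m ≤ t + n → c ≤ dotl (w m) ℓ} ∩ {w | w (t + n) = j})
      = μ (A ∩ {w | w t = x}) * phi ω ℓ x c n j := by
  induction n generalizing j with
  | zero =>
    simp only [phi, Nat.add_zero]
    by_cases hjx : j = x ∧ c ≤ dotl j ℓ
    · obtain ⟨hjx1, hjx2⟩ := hjx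
      rw [if_pos ⟨hjx1, hjx2⟩, mul_one]
      congr 1
      ext w
      simp only [Set.mem_inter_iff, Set.mem_setOf_eq]
      constructor
      · rintro ⟨⟨⟨h1, h2⟩, -⟩, -⟩; exact ⟨h1, h2⟩
      · rintro ⟨h1, h2⟩
        subst hjx1
        exact ⟨⟨⟨h1, h2⟩, fun m hm1 hm2 => by rw [le_antisymm hm2 hm1, h2]; exact hjx2⟩, h2⟩
    · rw [if_neg hjx, mul_zero]
      have hempty : A ∩ {w | w t = x} ∩ {w | ∀ m, t ≤ m → m ≤ t → c ≤ dotl (w m) ℓ}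
          ∩ {w | w t = j} = (∅ : Set (Traj d)) := by
        ext w
        simp only [Set.mem_inter_iff, Set.mem_setOf_eq, Set.mem_empty_iff_false, iff_false]
        rintro ⟨⟨⟨-, h2⟩, h3⟩, h4⟩
        exact hjx ⟨by rw [← h4, h2], by rw [← h4]; exact h3 t le_rfl le_rfl⟩
      rw [hempty]
      exact measure_empty
  | succ n ih =>
    by_cases hj : c ≤ dotl j ℓ
    · have hset : A ∩ {w | w t = x} ∩ {w | ∀ m, t ≤ m → m ≤ t + (n+1) → c ≤ dotl (w m) ℓ}
          ∩ {w | w (t + (n+1)) = j}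
          = (A ∩ {w | w t = x} ∩ {w | ∀ m, t ≤ m → m ≤ t + n → c ≤ dotl (w m) ℓ})
          ∩ {w | w (t + n + 1) = j} := by
        ext w
        simp only [Set.mem_inter_iff, Set.mem_setOf_eq]
        constructor
        · rintro ⟨⟨hAx, hS⟩, hlast⟩
          exact ⟨⟨hAx, fun m h1 h2 => hS m h1 (by omega)⟩, hlast⟩
        · rintro ⟨⟨hAx, hS⟩, hlast⟩
          refine ⟨⟨hAx, fun m h1 h2 => ?_⟩, hlast⟩
          rcases Nat.lt_or_ge m (t + n + 1) with hm | hm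
          · exact hS m h1 (by omega)
          · have : m = t + n + 1 := by omega
            rw [this, hlast]; exact hj
      set B := A ∩ {w | w t = x} ∩ {w | ∀ m, t ≤ m → m ≤ t + n → c ≤ dotl (w m) ℓ} with hB
      have hBdet : ∀ w w' : Traj d, (∀ m ≤ t + n, w m = w' m) → (w ∈ B ↔ w' ∈ B) := by
        intro w w' hmm
        simp only [hB, Set.mem_inter_iff, Set.mem_setOf_eq]
        refine and_congr (and_congr ?_ ?_) ?_
        · exact hAdet w w' fun m hm => hmm m (le_trans hm (Nat.le_add_right t n))
        · rw [hmm t (Nat.le_add_right t n)]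
        · constructor
          · intro h2 m a b; rw [← hmm m b]; exact h2 m a b
          · intro h2 m a b; rw [hmm m b]; exact h2 m a b
      have hBmeas : MeasurableSet B := measurableSet_det hBdet
      have hcj : MeasurableSet {w : Traj d | w (t + n + 1) = j} := by
        simpa using measurableSet_coord (t + n + 1) {j}
      rw [hset, measure_partition μ (hBmeas.inter hcj) (t + n)]
      have hterm : ∀ i : Zd d, B ∩ {w | w (t + n + 1) = j} ∩ {w | w (t + n) = i}
          = B ∩ {w | w (t + n) = i ∧ w (t + n + 1) = j} := by
        intro i; ext w
        simp only [Set.mem_inter_iff, Set.mem_setOf_eq]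
        tauto
      calc ∑' i : Zd d, μ (B ∩ {w | w (t + n + 1) = j} ∩ {w | w (t + n) = i})
          = ∑' i : Zd d, ENNReal.ofReal (ω i (j - i)) * μ (B ∩ {w | w (t + n) = i}) := by
            refine tsum_congr fun i => ?_
            rw [hterm i, hw.2.2 (t + n) B hBmeas hBdet i j]
        _ = ∑' i : Zd d, ENNReal.ofReal (ω i (j - i)) *
              (μ (A ∩ {w | w t = x}) * phi ω ℓ x c n i) := by
            refine tsum_congr fun i => ?_
            rw [hB, ih i]
        _ = μ (A ∩ {w | w t = x}) * ∑' i : Zd d, phi ω ℓ x c n i *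
              ENNReal.ofReal (ω i (j - i)) := by
            rw [← ENNReal.tsum_mul_left]
            exact tsum_congr fun i => by ring
        _ = μ (A ∩ {w | w t = x}) * phi ω ℓ x c (n + 1) j := by
            simp only [phi]
            rw [if_pos hj]
    · simp only [phi]
      rw [if_neg hj, mul_zero]
      have hempty : A ∩ {w | w t = x} ∩ {w | ∀ m, t ≤ m → m ≤ t + (n+1) → c ≤ dotl (w m) ℓ}
          ∩ {w | w (t + (n+1)) = j} = (∅ : Set (Traj d)) := by
        ext w
        simp only [Set.mem_inter_iff, Set.mem_setOf_eq, Set.mem_empty_iff_false, iff_false]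
        rintro ⟨⟨-, h3⟩, h4⟩
        exact hj (h4 ▸ h3 (t + (n+1)) (by omega) le_rfl)
      rw [hempty]
      exact measure_empty

lemma walk_surv {μ : Measure (Traj d)} {ω : Env d} {x0 : Zd d} (hw : IsWalk μ ω x0)
    (t : ℕ) (x : Zd d) (c : ℝ) {A : Set (Traj d)}
    (hAdet : ∀ w w' : Traj d, (∀ m ≤ t, w m = w' m) → (w ∈ A ↔ w' ∈ A)) :
    μ (A ∩ {w | w t = x} ∩ {w | ∀ m, t ≤ m → c ≤ dotl (w m) ℓ})
      = μ (A ∩ {w | w t = x}) * survA ω ℓ x c := by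
  haveI := hw.1
  set C : ℕ → Set (Traj d) := fun n =>
    A ∩ {w | w t = x} ∩ {w | ∀ m, t ≤ m → m ≤ t + n → c ≤ dotl (w m) ℓ} with hC
  have hCdet : ∀ n, ∀ w w' : Traj d, (∀ m ≤ t + n, w m = w' m) → (w ∈ C n ↔ w' ∈ C n) := by
    intro n w w' hmm
    simp only [hC, Set.mem_inter_iff, Set.mem_setOf_eq]
    refine and_congr (and_congr ?_ ?_) ?_
    · exact hAdet w w' fun m hm => hmm m (le_trans hm (Nat.le_add_right t n))
    · rw [hmm t (Nat.le_add_right t n)]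
    · constructor
      · intro h2 m a b; rw [← hmm m b]; exact h2 m a b
      · intro h2 m a b; rw [hmm m b]; exact h2 m a b
  have hInter : A ∩ {w | w t = x} ∩ {w | ∀ m, t ≤ m → c ≤ dotl (w m) ℓ} = ⋂ n, C n := by
    ext w
    simp only [hC, Set.mem_iInter, Set.mem_inter_iff, Set.mem_setOf_eq]
    constructor
    · rintro ⟨h1, h2⟩
      exact fun n => ⟨h1, fun m a _ => h2 m a⟩
    · intro h
      refine ⟨(h 0).1, fun m hm => ?_⟩
      exact (h (m - t)).2 m hm (by omega)
  have hanti : Antitone C := by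
    intro n n' hnn w hw'
    simp only [hC, Set.mem_inter_iff, Set.mem_setOf_eq] at hw' ⊢
    exact ⟨hw'.1, fun m a b => hw'.2 m a (by omega)⟩
  rw [hInter, Directed.measure_iInter
    (fun n => (measurableSet_det (hCdet n)).nullMeasurableSet)
    hanti.directed_ge ⟨0, measure_ne_top μ _⟩]
  have hCn : ∀ n, μ (C n) = μ (A ∩ {w | w t = x}) * ∑' j : Zd d, phi ω ℓ x c n j := by
    intro n
    rw [measure_partition μ (measurableSet_det (hCdet n)) (t + n), ← ENNReal.tsum_mul_left]
    exact tsum_congr fun j => walk_phi ℓ hw t x c hAdet n j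
  calc ⨅ n, μ (C n) = ⨅ n, μ (A ∩ {w | w t = x}) * ∑' j : Zd d, phi ω ℓ x c n j := by
        exact iInf_congr hCn
    _ = μ (A ∩ {w | w t = x}) * survA ω ℓ x c := by
        rw [survA, ENNReal.mul_iInf (fun h => absurd h (measure_ne_top μ _))]

end WalkLemmas
section Chains
variable {d : ℕ} (ℓ : Fin d → ℝ)

def chainSet (n : ℕ) (t : ℕ → ℕ) : Set (Traj d) :=
  {w | t 0 = 0 ∧ ∀ i < n, t i < t (i+1) ∧ dotl (w (t (i+1))) ℓ < dotl (w (t i)) ℓ ∧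
    ∀ m, t i < m → m < t (i+1) → dotl (w (t i)) ℓ ≤ dotl (w m) ℓ}

def pad (n : ℕ) (s : Fin (n+1) → ℕ) : ℕ → ℕ := fun i => if h : i < n+1 then s ⟨i, h⟩ else 0

def Gset (n : ℕ) : Set (Traj d) := ⋃ s : Fin (n+1) → ℕ, chainSet ℓ n (pad n s)

lemma chain_time_mono {n : ℕ} {t : ℕ → ℕ} (h : ∀ i < n, t i < t (i+1)) :
    ∀ j, j ≤ n → ∀ i, i ≤ j → t i ≤ t j := by
  intro j
  induction j with
  | zero => intro _ i hi; rw [Nat.le_zero.mp hi]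
  | succ j ih =>
    intro hjn i hi
    rcases Nat.lt_or_ge i (j+1) with hlt | hge
    · exact le_trans (ih (by omega) i (by omega)) (le_of_lt (h j (by omega)))
    · rw [show i = j + 1 by omega]

lemma chain_time_ge {n : ℕ} {t : ℕ → ℕ} (h0 : t 0 = 0) (h : ∀ i < n, t i < t (i+1)) :
    ∀ j ≤ n, j ≤ t j := by
  intro j
  induction j with
  | zero => omega
  | succ j ih => intro hj; have := h j (by omega); have := ih (by omega); omega

lemma chain_val_lt {n : ℕ} {t : ℕ → ℕ} {w : Traj d}
    (h : ∀ i < n, dotl (w (t (i+1))) ℓ < dotl (w (t i)) ℓ) :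
    ∀ j ≤ n, 1 ≤ j → dotl (w (t j)) ℓ < dotl (w (t 0)) ℓ := by
  intro j
  induction j with
  | zero => omega
  | succ j ih =>
    intro hj _
    rcases Nat.eq_zero_or_pos j with hj0 | hj1
    · subst hj0; exact h 0 (by omega)
    · exact lt_trans (h j (by omega)) (ih (by omega) hj1)

lemma chainSet_det {n : ℕ} {t : ℕ → ℕ} :
    ∀ w w' : Traj d, (∀ m ≤ t n, w m = w' m) → (w ∈ chainSet ℓ n t ↔ w' ∈ chainSet ℓ n t) := by
  have key : ∀ w w' : Traj d, (∀ m ≤ t n, w m = w' m) → w ∈ chainSet ℓ n t → w' ∈ chainSet ℓ n t := by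
    rintro w w' hmm ⟨h0, hch⟩
    have hinc : ∀ i < n, t i < t (i+1) := fun i hi => (hch i hi).1
    have hle : ∀ i ≤ n, t i ≤ t n := fun i hi => chain_time_mono hinc n le_rfl i hi
    refine ⟨h0, fun i hi => ?_⟩
    obtain ⟨h1, h2, h3⟩ := hch i hi
    rw [hmm (t (i+1)) (hle (i+1) (by omega)), hmm (t i) (hle i (by omega))] at h2
    refine ⟨h1, h2, fun m hm1 hm2 => ?_⟩
    have := h3 m hm1 hm2
    rwa [hmm m (by have := hle (i+1) (by omega); omega), hmm (t i) (hle i (by omega))] at this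
  intro w w' hmm
  exact ⟨key w w' hmm, key w' w (fun m hm => (hmm m hm).symm)⟩

lemma chain_extend {n : ℕ} {s : Fin (n+1) → ℕ} {w : Traj d}
    (hw : w ∈ chainSet ℓ n (pad n s))
    (hex : ∃ m, pad n s n < m ∧ dotl (w m) ℓ < dotl (w (pad n s n)) ℓ) :
    w ∈ Gset ℓ (n+1) := by
  classical
  obtain ⟨h0, hch⟩ := hw
  set T := pad n s n with hT
  set m0 := Nat.find hex with hm0
  have hspec := Nat.find_spec hex
  refine Set.mem_iUnion.mpr ⟨fun i => if (i : ℕ) ≤ n then pad n s i else m0, ?_⟩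
  have hpad : ∀ i : ℕ, i < n + 2 →
      pad (n+1) (fun i : Fin (n+2) => if (i : ℕ) ≤ n then pad n s i else m0) i
        = if i ≤ n then pad n s i else m0 := by
    intro i hi
    simp only [pad, dif_pos hi]
  constructor
  · rw [hpad 0 (by omega), if_pos (by omega)]
    exact h0
  · intro i hi
    rw [hpad i (by omega), hpad (i+1) (by omega)]
    rcases Nat.lt_or_ge i n with hin | hin
    · rw [if_pos (by omega), if_pos (by omega)]
      exact hch i hin
    · have hieq : i = n := by omega
      subst hieq
      rw [if_pos le_rfl, if_neg (by omega)]
      refine ⟨hspec.1, hspec.2, fun m hm1 hm2 => ?_⟩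
      have := Nat.find_min hex hm2
      push_neg at this
      exact this hm1
end Chains
section StepB
variable {d : ℕ} (ℓ : Fin d → ℝ)

lemma Gset_compl_null {μ : Measure (Traj d)} {ω : Env d} {x0 : Zd d} (hw : IsWalk μ ω x0)
    (hsurv : ∀ x : Zd d, survA ω ℓ x (dotl x ℓ) = 0) :
    ∀ n, μ (Gset ℓ n)ᶜ = 0 := by
  intro n
  induction n with
  | zero =>
    have huniv : (Gset ℓ 0 : Set (Traj d)) = Set.univ := by
      ext w
      simp only [Set.mem_univ, iff_true]
      refine Set.mem_iUnion.mpr ⟨fun _ => 0, ?_, fun i hi => absurd hi (by omega)⟩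
      simp [pad]
    rw [huniv, Set.compl_univ]
    exact measure_empty
  | succ n ih =>
    have hincl : (Gset ℓ (n+1) : Set (Traj d))ᶜ ⊆ (Gset ℓ n)ᶜ ∪
        ⋃ s : Fin (n+1) → ℕ, ⋃ x : Zd d,
          (chainSet ℓ n (pad n s) ∩ {w | w (pad n s n) = x} ∩
            {w | ∀ m, pad n s n ≤ m → dotl x ℓ ≤ dotl (w m) ℓ}) := by
      intro w hwc
      by_cases hwG : w ∈ Gset ℓ n
      · right
        obtain ⟨s, hs⟩ := Set.mem_iUnion.mp hwG
        refine Set.mem_iUnion.mpr ⟨s, Set.mem_iUnion.mpr ⟨w (pad n s n), ⟨hs, rfl⟩, ?_⟩⟩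
        intro m hm
        rcases Nat.eq_or_lt_of_le hm with hm1 | hm2
        · rw [← hm1]
        · by_contra hcon
          push_neg at hcon
          exact hwc (chain_extend ℓ hs ⟨m, hm2, hcon⟩)
      · exact Or.inl hwG
    refine measure_mono_null hincl (measure_union_null ih ?_)
    refine measure_iUnion_null fun s => measure_iUnion_null fun x => ?_
    rw [walk_surv ℓ hw (pad n s n) x (dotl x ℓ) (chainSet_det ℓ), hsurv x, mul_zero]

lemma tendsto_null {μ : Measure (Traj d)} {ω : Env d} (hw : IsWalk μ ω (0 : Zd d))
    (hsurv : ∀ x : Zd d, survA ω ℓ x (dotl x ℓ) = 0) :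
    μ {w : Traj d | Tendsto (fun n => dotl (w n) ℓ) atTop atTop} = 0 := by
  haveI := hw.1
  have hincl : {w : Traj d | Tendsto (fun n => dotl (w n) ℓ) atTop atTop} ⊆
      {w : Traj d | w 0 = 0}ᶜ ∪ ⋃ n, (Gset ℓ n)ᶜ := by
    intro w hwT
    by_cases hw0 : w 0 = 0
    · right
      simp only [Set.mem_iUnion, Set.mem_compl_iff]
      by_contra hcon
      push_neg at hcon
      obtain ⟨N, hN⟩ := Filter.eventually_atTop.mp (hwT.eventually_ge_atTop 0)
      obtain ⟨s, hs⟩ := Set.mem_iUnion.mp (hcon (N+1))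
      obtain ⟨h0, hch⟩ := hs
      set t := pad (N+1) s with ht
      have hinc : ∀ i < N+1, t i < t (i+1) := fun i hi => (hch i hi).1
      have hval : dotl (w (t (N+1))) ℓ < dotl (w (t 0)) ℓ :=
        chain_val_lt ℓ (fun i hi => (hch i hi).2.1) (N+1) le_rfl (by omega)
      have htge : N + 1 ≤ t (N+1) := chain_time_ge h0 hinc (N+1) le_rfl
      have hge := hN (t (N+1)) (by omega)
      rw [h0, hw0, dotl_zero] at hval
      linarith
    · exact Or.inl hw0
  refine measure_mono_null hincl (measure_union_null ?_ (measure_iUnion_null fun n =>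
    Gset_compl_null ℓ hw hsurv n))
  have h1 : μ {w : Traj d | w 0 = 0} = 1 := hw.2.1
  have hm : MeasurableSet {w : Traj d | w 0 = 0} := by
    simpa using measurableSet_coord 0 {(0 : Zd d)}
  rw [measure_compl hm (measure_ne_top μ _), h1, measure_univ]
  simp

end StepB
section Shift
variable {d : ℕ}

lemma shiftE_comp (a b : Zd d) (ω : Env d) : shiftE b (shiftE a ω) = shiftE (a + b) ω := by
  funext x e
  simp only [shiftE]
  congr 1
  abel

lemma shiftE_zero (ω : Env d) : shiftE (0 : Zd d) ω = ω := by
  funext x e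
  simp [shiftE]

lemma measurable_shiftE (k : Zd d) : Measurable (shiftE k : Env d → Env d) :=
  measurable_pi_lambda _ fun x => measurable_pi_lambda _ fun e =>
    ((measurable_pi_apply e).comp (measurable_pi_apply (k + x)))

variable {IP : Measure (Env d)} [IsProbabilityMeasure IP]

lemma preimage_meas_eq (hsi : ShiftInv IP) (k : Zd d) {s : Set (Env d)}
    (hs : MeasurableSet s) : IP (shiftE k ⁻¹' s) = IP s := by
  rw [← Measure.map_apply (measurable_shiftE k) hs, hsi k]

lemma preimage_null (hsi : ShiftInv IP) (k : Zd d) {s : Set (Env d)}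
    (hs : MeasurableSet s) (h0 : IP s = 0) : IP (shiftE k ⁻¹' s) = 0 := by
  rw [preimage_meas_eq hsi k hs, h0]

/-- two-sided a.e. invariance property of a set under the shift by `k`. -/
def PInv (IP : Measure (Env d)) (A : Set (Env d)) (k : Zd d) : Prop :=
  IP ((shiftE k ⁻¹' A) \ A) = 0 ∧ IP (A \ (shiftE k ⁻¹' A)) = 0

lemma PInv_zero (A : Set (Env d)) : PInv IP A 0 := by
  constructor <;> · rw [show shiftE (0:Zd d) ⁻¹' A = A by ext ω; rw [Set.mem_preimage, shiftE_zero]]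
                    simp

lemma PInv_of_diff_null (hsi : ShiftInv IP) {A : Set (Env d)} (hA : MeasurableSet A) (k : Zd d)
    (h : IP ((shiftE k ⁻¹' A) \ A) = 0) : PInv IP A k := by
  refine ⟨h, ?_⟩
  set s := shiftE k ⁻¹' A with hs
  have hsm : MeasurableSet s := measurable_shiftE k hA
  have heq : IP s = IP A := preimage_meas_eq hsi k hA
  have h1 : IP (s \ A) + IP (s ∩ A) = IP s := measure_diff_add_inter s hA
  have h2 : IP (A \ s) + IP (A ∩ s) = IP A := measure_diff_add_inter A hsm
  rw [h, zero_add] at h1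
  rw [Set.inter_comm] at h2
  rw [h1, heq] at h2
  have hfin : IP A ≠ ∞ := measure_ne_top IP A
  nth_rewrite 2 [← zero_add (IP A)] at h2
  exact (ENNReal.add_left_inj hfin).mp h2

lemma PInv_neg (hsi : ShiftInv IP) {A : Set (Env d)} (hA : MeasurableSet A) (k : Zd d)
    (h : PInv IP A k) : PInv IP A (-k) := by
  have hcomp : ∀ s : Set (Env d), shiftE (-k) ⁻¹' (shiftE k ⁻¹' s) = s := by
    intro s
    ext ω
    simp only [Set.mem_preimage, shiftE_comp]
    rw [show (-k) + k = (0 : Zd d) by abel, shiftE_zero]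
  have hkA : MeasurableSet (shiftE k ⁻¹' A) := measurable_shiftE k hA
  constructor
  · have h1 : shiftE (-k) ⁻¹' (A \ (shiftE k ⁻¹' A)) = (shiftE (-k) ⁻¹' A) \ A := by
      rw [Set.preimage_diff, hcomp A]
    have := preimage_null hsi (-k) (hA.diff hkA) h.2
    rwa [h1] at this
  · have h1 : shiftE (-k) ⁻¹' ((shiftE k ⁻¹' A) \ A) = A \ (shiftE (-k) ⁻¹' A) := by
      rw [Set.preimage_diff, hcomp A]
    have := preimage_null hsi (-k) (hkA.diff hA) h.1
    rwa [h1] at this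

lemma PInv_add (hsi : ShiftInv IP) {A : Set (Env d)} (hA : MeasurableSet A) {a b : Zd d}
    (ha : PInv IP A a) (hb : PInv IP A b) : PInv IP A (a + b) := by
  have hkA : ∀ k : Zd d, MeasurableSet (shiftE k ⁻¹' A) := fun k => measurable_shiftE k hA
  have hcomp : shiftE (a + b) ⁻¹' A = shiftE a ⁻¹' (shiftE b ⁻¹' A) := by
    ext ω
    simp only [Set.mem_preimage, shiftE_comp]
  constructor
  · have hnull : IP ((shiftE a ⁻¹' ((shiftE b ⁻¹' A) \ A)) ∪ ((shiftE a ⁻¹' A) \ A)) = 0 :=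
      measure_union_null (preimage_null hsi a ((hkA b).diff hA) hb.1) ha.1
    refine measure_mono_null ?_ hnull
    rw [hcomp]
    intro ω hω
    by_cases h2 : shiftE a ω ∈ A
    · exact Or.inr ⟨h2, hω.2⟩
    · exact Or.inl ⟨hω.1, h2⟩
  · have hnull : IP (((A \ (shiftE a ⁻¹' A))) ∪ (shiftE a ⁻¹' (A \ (shiftE b ⁻¹' A)))) = 0 :=
      measure_union_null ha.2 (preimage_null hsi a (hA.diff (hkA b)) hb.2)
    refine measure_mono_null ?_ hnull
    rw [hcomp]
    intro ω hω
    by_cases h2 : shiftE a ω ∈ A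
    · exact Or.inr ⟨h2, hω.2⟩
    · exact Or.inl ⟨hω.1, h2⟩

lemma PInv_single (hsi : ShiftInv IP) {A : Set (Env d)} (hA : MeasurableSet A) (i : Fin d)
    (h1 : PInv IP A (Pi.single i 1)) (c : ℤ) : PInv IP A (Pi.single i c) := by
  have hneg : PInv IP A (-(Pi.single i 1)) := PInv_neg hsi hA _ h1
  induction c using Int.induction_on with
  | zero => rw [show (Pi.single i (0:ℤ) : Zd d) = 0 from by simp]; exact PInv_zero A
  | succ n ih =>
    rw [show (Pi.single i ((n:ℤ)+1) : Zd d) = Pi.single i (n:ℤ) + Pi.single i 1 from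
      Pi.single_add i _ _]
    exact PInv_add hsi hA ih h1
  | pred n ih =>
    rw [show (Pi.single i (-(n:ℤ)-1) : Zd d) = Pi.single i (-(n:ℤ)) + (-(Pi.single i 1)) from by
      rw [← Pi.single_neg, ← Pi.single_add, show -(n:ℤ) + -1 = -(n:ℤ)-1 from by ring]]
    exact PInv_add hsi hA ih hneg

lemma PInv_all (hsi : ShiftInv IP) {A : Set (Env d)} (hA : MeasurableSet A)
    (h1 : ∀ i : Fin d, PInv IP A (Pi.single i 1)) (k : Zd d) : PInv IP A k := by
  have hsum : ∀ s : Finset (Fin d), PInv IP A (∑ i ∈ s, Pi.single i (k i)) := by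
    intro s
    induction s using Finset.induction_on with
    | empty => simpa using PInv_zero A
    | insert _ _ hni ih =>
      rw [Finset.sum_insert hni]
      exact PInv_add hsi hA (PInv_single hsi hA _ (h1 _) _) ih
  have := hsum Finset.univ
  rwa [show (∑ i, Pi.single i (k i) : Zd d) = k from Finset.univ_sum_single k] at this

end Shift
section Final
variable {d M : ℕ}

/-- environments with positive probability of never going below level 0. -/
def Aset (d : ℕ) (ℓ : Fin d → ℝ) : Set (Env d) := {ω : Env d | 0 < survA ω ℓ 0 0}

lemma measurable_Aset (ℓ : Fin d → ℝ) : MeasurableSet (Aset d ℓ) :=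
  measurableSet_lt measurable_const (measurable_survA ℓ 0 0)

lemma stepA_null (ℓ : Fin d → ℝ) {IP : Measure (Env d)} [IsProbabilityMeasure IP]
    (hgood : ∀ᵐ ω ∂IP, GoodEnv M ω) (hell : WeakElliptic IP ℓ)
    {g : Zd d} (hunit : (∑ i, (g i) * (g i)) = 1) (hdot : 0 ≤ dotl g ℓ) :
    IP ((shiftE g ⁻¹' Aset d ℓ) \ Aset d ℓ) = 0 := by
  rw [measure_eq_zero_iff_ae_notMem]
  filter_upwards [hgood, hell] with ω hg he
  rintro ⟨h1, h2⟩
  apply h2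
  have hpos : 0 < survA (shiftE g ω) ℓ 0 0 := h1
  rw [survA_shift, add_zero, zero_add] at hpos
  have hg0 : 0 < survA ω ℓ g 0 := hpos.trans_le (survA_anti_c ℓ hdot ω g)
  have key : ENNReal.ofReal (ω 0 g) * survA ω ℓ (0 + g) 0 ≤ survA ω ℓ 0 0 :=
    survA_step ℓ hg (by rw [dotl_zero]) g
  rw [zero_add] at key
  have hmul : 0 < ENNReal.ofReal (ω 0 g) * survA ω ℓ g 0 :=
    ENNReal.mul_pos (ENNReal.ofReal_pos.mpr (he g hunit hdot)).ne' hg0.ne'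
  exact hmul.trans_le key

lemma gen_exists (ℓ : Fin d → ℝ) (i : Fin d) : ∃ g : Zd d,
    (∑ j, (g j) * (g j)) = 1 ∧ 0 ≤ dotl g ℓ ∧
    (g = Pi.single i 1 ∨ g = -(Pi.single i 1)) := by
  have hu1 : (∑ j, ((Pi.single i 1 : Zd d) j) * ((Pi.single i 1 : Zd d) j)) = 1 := by
    simp [Pi.single_apply]
  by_cases h : 0 ≤ ℓ i
  · exact ⟨Pi.single i 1, hu1, by rw [dotl_single]; exact h, Or.inl rfl⟩
  · refine ⟨-(Pi.single i 1), ?_, by rw [dotl_neg, dotl_single]; linarith, Or.inr rfl⟩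
    have : ∀ j, ((-(Pi.single i 1) : Zd d) j) * ((-(Pi.single i 1) : Zd d) j)
        = ((Pi.single i 1 : Zd d) j) * ((Pi.single i 1 : Zd d) j) := fun j => by
      simp
    rw [Finset.sum_congr rfl fun j _ => this j]
    exact hu1

end Final

/-- if `IP` is ergodic, shift invariant, weakly elliptic, and the
walk is transient in direction `ℓ`, then the set
`S = {ω : ∀ y, P_y^ω(inf_m X_m·ℓ < 0) = 1}` is `IP`-null, and for `IP`-a.e. `ω`,
`P_0^ω(inf_m X_m·ℓ ≥ 0) > 0`. -/
theorem no_backtracking {d M : ℕ} (ℓ : Fin d → ℝ)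
    (IP : Measure (Env d)) [IsProbabilityMeasure IP]
    (herg : ErgEnv IP) (hgood : ∀ᵐ ω ∂IP, GoodEnv M ω)
    (hell : WeakElliptic IP ℓ)
    (P : Env d → Zd d → Measure (Traj d))
    (hP : ∀ᵐ ω ∂IP, ∀ y : Zd d, IsWalk (P ω y) ω y)
    (ann : Measure (Traj d))
    (hann : ∀ S : Set (Traj d), MeasurableSet S → ann S = ∫⁻ ω, P ω 0 S ∂IP)
    (htrans : ann {w | Tendsto (fun n => dotl (w n) ℓ) atTop atTop} = 1) :
    IP {ω | ∀ y : Zd d, P ω y {w | ∃ m : ℕ, dotl (w m) ℓ < 0} = 1} = 0 ∧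
    ∀ᵐ ω ∂IP, 0 < P ω 0 {w | ∀ m : ℕ, 0 ≤ dotl (w m) ℓ} := by
  obtain ⟨hsi, herg2⟩ := herg
  set A : Set (Env d) := Aset d ℓ with hAdef
  have hAmeas : MeasurableSet A := measurable_Aset ℓ
  have hPk : ∀ k : Zd d, PInv IP A k := by
    apply PInv_all hsi hAmeas
    intro i
    obtain ⟨g, hu, hdg, hgor⟩ := gen_exists ℓ i
    have hPg : PInv IP A g :=
      PInv_of_diff_null hsi hAmeas g (stepA_null (M := M) ℓ hgood hell hu hdg)
    rcases hgor with rfl | hgneg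
    · exact hPg
    · have hneg := PInv_neg hsi hAmeas g hPg
      rwa [hgneg, neg_neg] at hneg
  set A1 : Set (Env d) := ⋂ k : Zd d, shiftE k ⁻¹' A with hA1def
  have hA1meas : MeasurableSet A1 := MeasurableSet.iInter fun k => measurable_shiftE k hAmeas
  have hA1inv : ∀ k : Zd d, shiftE k ⁻¹' A1 = A1 := by
    intro j
    ext ω
    simp only [hA1def, Set.mem_preimage, Set.mem_iInter, Set.mem_preimage]
    constructor
    · intro h k
      have h2 := h (k - j)
      rwa [shiftE_comp, show j + (k - j) = k by abel] at h2
    · intro h k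
      rw [shiftE_comp]
      exact h (j + k)
  have hA1sub : A1 ⊆ A := fun ω h => by
    have h2 := Set.mem_iInter.mp h 0
    rwa [Set.mem_preimage, shiftE_zero] at h2
  have hdiffnull : IP (A \ A1) = 0 := by
    have hnull : IP (⋃ k : Zd d, (A \ (shiftE k ⁻¹' A))) = 0 :=
      measure_iUnion_null fun k => (hPk k).2
    refine measure_mono_null ?_ hnull
    intro ω hω
    simp only [Set.mem_diff, hA1def, Set.mem_iInter] at hω
    push_neg at hω
    obtain ⟨h1, k, h2⟩ := hω
    exact Set.mem_iUnion.mpr ⟨k, h1, h2⟩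
  have hmeq : IP A1 = IP A := by
    have h1 : IP (A \ A1) + IP (A ∩ A1) = IP A := measure_diff_add_inter A hA1meas
    rwa [hdiffnull, zero_add, Set.inter_eq_right.mpr hA1sub] at h1
  set Tset : Set (Traj d) := {w : Traj d | Tendsto (fun n => dotl (w n) ℓ) atTop atTop}
    with hTdef
  have hTeq : Tset = ⋂ b : ℕ, ⋃ N : ℕ, ⋂ n : ℕ,
      {w : Traj d | N ≤ n → (b:ℝ) ≤ dotl (w n) ℓ} := by
    ext w
    simp only [hTdef, Set.mem_setOf_eq, Set.mem_iInter, Set.mem_iUnion, Set.mem_setOf_eq]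
    constructor
    · intro h b
      obtain ⟨N, hN⟩ := Filter.eventually_atTop.mp (h.eventually_ge_atTop (b:ℝ))
      exact ⟨N, fun n hn => hN n hn⟩
    · intro h
      rw [tendsto_atTop_atTop]
      intro b
      obtain ⟨nb, hnb⟩ := exists_nat_ge b
      obtain ⟨N, hN⟩ := h nb
      exact ⟨N, fun n hn => le_trans hnb (hN n hn)⟩
  have hTmeas : MeasurableSet Tset := by
    rw [hTeq]
    refine MeasurableSet.iInter fun b => MeasurableSet.iUnion fun N =>
      MeasurableSet.iInter fun n => ?_
    by_cases hNn : N ≤ n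
    · have : {w : Traj d | N ≤ n → (b:ℝ) ≤ dotl (w n) ℓ}
          = {w : Traj d | w n ∈ {x : Zd d | (b:ℝ) ≤ dotl x ℓ}} := by
        ext w; simp [hNn]
      rw [this]
      exact measurableSet_coord n _
    · have : {w : Traj d | N ≤ n → (b:ℝ) ≤ dotl (w n) ℓ} = Set.univ := by
        ext w; simp [hNn]
      rw [this]
      exact MeasurableSet.univ
  set E0 : Set (Traj d) := {w : Traj d | ∀ m : ℕ, 0 ≤ dotl (w m) ℓ} with hE0
  have hE0meas : MeasurableSet E0 := by
    have : E0 = ⋂ m : ℕ, {w : Traj d | w m ∈ {x : Zd d | 0 ≤ dotl x ℓ}} := by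
      ext w; simp [hE0]
    rw [this]
    exact MeasurableSet.iInter fun m => measurableSet_coord m _
  rcases herg2 A1 hA1meas hA1inv with h0 | h1
  · exfalso
    have hAnull : IP A = 0 := by rw [← hmeq, h0]
    have hae0 : ∀ y : Zd d, ∀ᵐ ω ∂IP, survA ω ℓ y (dotl y ℓ) = 0 := by
      intro y
      have hnull : IP (shiftE y ⁻¹' A) = 0 := preimage_null hsi y hAmeas hAnull
      have hseteq : {ω : Env d | ¬ survA ω ℓ y (dotl y ℓ) = 0} = shiftE y ⁻¹' A := by
        ext ω
        simp only [Set.mem_setOf_eq, Set.mem_preimage, hAdef, Aset, survA_shift, add_zero,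
          zero_add, pos_iff_ne_zero]
      rw [ae_iff, hseteq]
      exact hnull
    have hae : ∀ᵐ ω ∂IP, ∀ y : Zd d, survA ω ℓ y (dotl y ℓ) = 0 := ae_all_iff.mpr hae0
    have hPT : ∀ᵐ ω ∂IP, P ω 0 Tset = 0 := by
      filter_upwards [hae, hP] with ω ha hb
      exact tendsto_null ℓ (hb 0) ha
    have hann0 : ann Tset = 0 := by
      rw [hann Tset hTmeas, lintegral_congr_ae hPT, lintegral_zero]
    rw [hTdef] at hann0
    rw [htrans] at hann0
    exact one_ne_zero hann0
  · have hA1c : IP A1ᶜ = 0 := by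
      rw [measure_compl hA1meas (measure_ne_top IP _), h1, measure_univ, tsub_self]
    have haeA : ∀ᵐ ω ∂IP, ω ∈ A1 := by
      have := measure_eq_zero_iff_ae_notMem.mp hA1c
      filter_upwards [this] with ω h
      simpa using h
    have hmain : ∀ᵐ ω ∂IP, 0 < P ω 0 E0 := by
      filter_upwards [haeA, hgood, hP] with ω hA1ω hgω hPω
      have hg0 : 0 < survA ω ℓ 0 0 := hA1sub hA1ω
      have hw : IsWalk (P ω 0) ω (0 : Zd d) := hPω 0
      have hws := walk_surv ℓ hw 0 (0 : Zd d) 0 (A := Set.univ)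
        (fun w w' _ => Iff.rfl)
      rw [Set.univ_inter, hw.2.1, one_mul] at hws
      have hsub : {w : Traj d | w 0 = 0} ∩ {w : Traj d | ∀ m, 0 ≤ m → 0 ≤ dotl (w m) ℓ}
          ⊆ E0 := by
        rintro w ⟨-, h2⟩
        exact fun m => h2 m (Nat.zero_le m)
      calc (0:ℝ≥0∞) < survA ω ℓ 0 0 := hg0
        _ = P ω 0 ({w : Traj d | w 0 = 0} ∩ {w : Traj d | ∀ m, 0 ≤ m → 0 ≤ dotl (w m) ℓ}) :=
            hws.symm
        _ ≤ P ω 0 E0 := measure_mono hsub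
    refine ⟨?_, hmain⟩
    have hbad : IP {ω : Env d | ¬ (0 < P ω 0 E0 ∧ IsProbabilityMeasure (P ω 0))} = 0 := by
      rw [← ae_iff]
      filter_upwards [hmain, hP] with ω ha hb
      exact ⟨ha, (hb 0).1⟩
    refine measure_mono_null ?_ hbad
    intro ω hω
    simp only [Set.mem_setOf_eq] at hω ⊢
    rintro ⟨hpos, hprob⟩
    have h1 := hω 0
    have hcompl : {w : Traj d | ∃ m : ℕ, dotl (w m) ℓ < 0} = E0ᶜ := by
      ext w
      simp only [hE0, Set.mem_setOf_eq, Set.mem_compl_iff, not_forall, not_le]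
    rw [hcompl] at h1
    haveI := hprob
    have hsum : P ω 0 E0 + P ω 0 E0ᶜ = 1 := by
      rw [measure_add_measure_compl hE0meas, measure_univ]
    rw [h1] at hsum
    nth_rewrite 2 [← zero_add (1:ℝ≥0∞)] at hsum
    have h2 : P ω 0 E0 = 0 := (ENNReal.add_left_inj ENNReal.one_ne_top).mp hsum
    rw [h2] at hpos
    exact lt_irrefl 0 hpos
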